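/- The indicator function of f(z) = sin z equals |sin θ|: for each θ, limsup_{r→∞} (log |sin(r e^{iθ})|)/r = |sin θ|. -/

import Mathlib

open Filter

lemma abs_sin_bounds (z : ℂ) :
    (Real.exp |z.im| - Real.exp (-|z.im|)) / 2 ≤ ‖Complex.sin z‖ ∧
    ‖Complex.sin z‖ ≤ Real.exp |z.im| := by
  have hdef : Complex.sin z =
      (Complex.exp (-z * Complex.I) - Complex.exp (z * Complex.I)) * Complex.I / 2 := rfl
  have h1 : (-z * Complex.I).re = z.im := by simp [Complex.mul_re]
  have h2 : (z * Complex.I).re = -z.im := by simp [Complex.mul_re]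
  have habs : ‖Complex.sin z‖ =
      ‖Complex.exp (-z * Complex.I) - Complex.exp (z * Complex.I)‖ / 2 := by
    rw [hdef, norm_div, norm_mul, Complex.norm_I, Complex.norm_two, mul_one]
  have e1 : ‖Complex.exp (-z * Complex.I)‖ = Real.exp z.im := by
    rw [Complex.norm_exp, h1]
  have e2 : ‖Complex.exp (z * Complex.I)‖ = Real.exp (-z.im) := by
    rw [Complex.norm_exp, h2]
  constructor
  · have htri : |‖Complex.exp (-z * Complex.I)‖ -
        ‖Complex.exp (z * Complex.I)‖| ≤
        ‖Complex.exp (-z * Complex.I) - Complex.exp (z * Complex.I)‖ :=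
      abs_norm_sub_norm_le _ _
    rw [e1, e2] at htri
    have key : Real.exp |z.im| - Real.exp (-|z.im|) ≤ |Real.exp z.im - Real.exp (-z.im)| := by
      rcases abs_cases z.im with ⟨h, _⟩ | ⟨h, _⟩
      · rw [h]; exact le_abs_self _
      · rw [h, neg_neg]
        rw [abs_sub_comm]
        exact le_abs_self _
    rw [habs]
    have := key.trans htri
    linarith
  · have htri : ‖Complex.exp (-z * Complex.I) - Complex.exp (z * Complex.I)‖ ≤
        Real.exp z.im + Real.exp (-z.im) := by
      rw [← e1, ← e2]
      simpa [sub_eq_add_neg] using norm_add_le (Complex.exp (-z * Complex.I)) (-Complex.exp (z * Complex.I))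
    rw [habs]
    have b1 : Real.exp z.im ≤ Real.exp |z.im| := Real.exp_le_exp.2 (le_abs_self _)
    have b2 : Real.exp (-z.im) ≤ Real.exp |z.im| := Real.exp_le_exp.2 (neg_le_abs _)
    linarith

lemma im_z (r θ : ℝ) : ((r : ℂ) * Complex.exp (Complex.I * θ)).im = r * Real.sin θ := by
  rw [mul_comm Complex.I (θ:ℂ)]
  simp [Complex.exp_ofReal_mul_I_im, Complex.mul_im, Complex.exp_ofReal_mul_I_re]

lemma case_nonzero (θ : ℝ) (hs : Real.sin θ ≠ 0) :
    Tendsto (fun r : ℝ =>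
        Real.log (‖Complex.sin (r * Complex.exp (Complex.I * θ))‖) / r)
      atTop (nhds |Real.sin θ|) := by
  set s := |Real.sin θ| with hsdef
  have hs0 : 0 < s := abs_pos.2 hs
  have hlim : Tendsto (fun r : ℝ => s - Real.log 4 / r) atTop (nhds s) := by
    have : Tendsto (fun r : ℝ => Real.log 4 / r) atTop (nhds 0) :=
      tendsto_const_nhds.div_atTop tendsto_id
    simpa using tendsto_const_nhds.sub this
  apply tendsto_of_tendsto_of_tendsto_of_le_of_le' hlim tendsto_const_nhds
  · -- lower bound eventually
    filter_upwards [eventually_ge_atTop (max 1 (1 / s))] with r hr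
    have hr1 : (1:ℝ) ≤ r := le_trans (le_max_left _ _) hr
    have hrpos : 0 < r := lt_of_lt_of_le one_pos hr1
    have hy : 1 ≤ r * s := by
      have h2 : 1 / s ≤ r := le_trans (le_max_right _ _) hr
      rw [div_le_iff₀ hs0] at h2
      linarith
    set z := (r : ℂ) * Complex.exp (Complex.I * θ)
    have hzim : |z.im| = r * s := by
      rw [im_z, abs_mul, abs_of_pos hrpos]
    have hlow := (abs_sin_bounds z).1
    rw [hzim] at hlow
    have hexp2 : (2:ℝ) ≤ Real.exp (r * s) := by
      calc (2:ℝ) ≤ Real.exp 1 := by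
              have := Real.add_one_le_exp 1; linarith
        _ ≤ Real.exp (r * s) := Real.exp_le_exp.2 hy
    have hexpneg : Real.exp (-(r * s)) ≤ 1 := Real.exp_le_one_iff.2 (by linarith)
    have hq : Real.exp (r * s) / 4 ≤ (Real.exp (r * s) - Real.exp (-(r * s))) / 2 := by
      linarith
    have hqpos : 0 < Real.exp (r * s) / 4 := by positivity
    have hlog : r * s - Real.log 4 ≤ Real.log (‖Complex.sin z‖) := by
      calc r * s - Real.log 4 = Real.log (Real.exp (r * s) / 4) := by
            rw [Real.log_div (Real.exp_ne_zero _) (by norm_num), Real.log_exp]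
        _ ≤ Real.log (‖Complex.sin z‖) :=
            Real.log_le_log hqpos (le_trans hq hlow)
    calc s - Real.log 4 / r = (r * s - Real.log 4) / r := by
          field_simp
      _ ≤ Real.log (‖Complex.sin z‖) / r := by gcongr
  · -- upper bound eventually
    filter_upwards [eventually_gt_atTop (0:ℝ)] with r hrpos
    set z := (r : ℂ) * Complex.exp (Complex.I * θ)
    have hzim : |z.im| = r * s := by rw [im_z, abs_mul, abs_of_pos hrpos]
    have hup := (abs_sin_bounds z).2
    rw [hzim] at hup
    have hlog : Real.log (‖Complex.sin z‖) ≤ r * s := by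
      rcases eq_or_lt_of_le (norm_nonneg (Complex.sin z)) with h | h
      · rw [← h, Real.log_zero]; positivity
      · exact (Real.log_le_log h hup).trans_eq (Real.log_exp _)
    rw [div_le_iff₀ hrpos]
    linarith

lemma limsup_zero_case :
    Filter.limsup (fun r : ℝ => Real.log |Real.sin r| / r) atTop = 0 := by
  set g := fun r : ℝ => Real.log |Real.sin r| / r with hg
  have h0mem : ∀ᶠ r in atTop, g r ≤ 0 := by
    filter_upwards [eventually_gt_atTop (0:ℝ)] with r hr
    exact div_nonpos_of_nonpos_of_nonneg
      (Real.log_nonpos (abs_nonneg _) (Real.abs_sin_le_one r)) hr.le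
  have hlb : ∀ a ∈ {a : ℝ | ∀ᶠ r in atTop, g r ≤ a}, 0 ≤ a := by
    intro a ha
    obtain ⟨N, hN⟩ := eventually_atTop.mp ha
    obtain ⟨n, hn⟩ := exists_nat_ge ((N - Real.pi / 2) / (2 * Real.pi))
    set r := Real.pi / 2 + n * (2 * Real.pi) with hrdef
    have hrN : N ≤ r := by
      have h2pi : (0:ℝ) < 2 * Real.pi := by positivity
      rw [div_le_iff₀ h2pi] at hn
      rw [hrdef]; linarith
    have hsin : Real.sin r = 1 := by
      rw [hrdef, Real.sin_add_nat_mul_two_pi, Real.sin_pi_div_two]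
    have : g r = 0 := by
      rw [hg]; simp [hsin]
    linarith [hN r hrN]
  rw [Filter.limsup_eq]
  apply le_antisymm
  · exact csInf_le ⟨0, hlb⟩ h0mem
  · exact le_csInf ⟨0, h0mem⟩ hlb

theorem stmt_6 (θ : ℝ) (hθ : θ ∈ Set.Ioc (-Real.pi) Real.pi) :
    Filter.limsup
      (fun r : ℝ =>
        Real.log (‖Complex.sin (r * Complex.exp (Complex.I * θ))‖) / r)
      atTop = |Real.sin θ| := by
  by_cases hs : Real.sin θ = 0
  · have habs : ∀ r : ℝ,
        ‖Complex.sin (r * Complex.exp (Complex.I * θ))‖ = |Real.sin r| := by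
      rcases lt_or_eq_of_le hθ.2 with hlt | heq
      · have hθ0 : θ = 0 := (Real.sin_eq_zero_iff_of_lt_of_lt hθ.1 hlt).mp hs
        intro r
        simp [hθ0, ← Complex.ofReal_sin, Complex.norm_real, Real.norm_eq_abs]
      · intro r
        rw [heq]
        rw [mul_comm Complex.I (Real.pi : ℂ), Complex.exp_pi_mul_I]
        simp [← Complex.ofReal_sin, Complex.norm_real, Real.norm_eq_abs]
    have : (fun r : ℝ =>
        Real.log (‖Complex.sin (r * Complex.exp (Complex.I * θ))‖) / r) =
        fun r : ℝ => Real.log |Real.sin r| / r := by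
      funext r; rw [habs r]
    rw [this, limsup_zero_case, hs, abs_zero]
  · exact (case_nonzero θ hs).limsup_eq
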